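/- If n₁ and n₂ are coprime squarefree positive integers for which the division fields K_{n₁} and K_{n₂} are linearly disjoint over K, then δ_{E/K}(n₁·n₂) = δ_{E/K}(n₁)·δ_{E/K}(n₂). -/

import Mathlib

open scoped NumberField

noncomputable section

/-- The short Weierstrass curve `y² = x³ + a·x + b` over `R`, in affine coordinates. -/
def shortCurve (R : Type) [CommRing R] (a b : R) : WeierstrassCurve.Affine R :=
  { a₁ := 0, a₂ := 0, a₃ := 0, a₄ := a, a₆ := b }

variable (K : Type) [Field K] [NumberField K]

/-- The discriminant `-16(4A³+27B²)` of `y² = x³ + Ax + B`. -/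
def discABS (A B : 𝓞 K) : 𝓞 K := -16 * (4 * A ^ 3 + 27 * B ^ 2)

open Classical in
/-- The `m`-division field of `y² = x³ + Ax + B` inside an algebraic closure of `K`. -/
def divisionField (A B : 𝓞 K) (m : ℕ) : IntermediateField K (AlgebraicClosure K) :=
  IntermediateField.adjoin K
    {z : AlgebraicClosure K |
      ∃ (x y : AlgebraicClosure K)
        (h : (shortCurve (AlgebraicClosure K)
            (algebraMap (𝓞 K) (AlgebraicClosure K) A)
            (algebraMap (𝓞 K) (AlgebraicClosure K) B)).Nonsingular x y),
        m • (WeierstrassCurve.Affine.Point.some x y h) = 0 ∧ (z = x ∨ z = y)}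

/-- The inclusion–exclusion sum `δ_{E/K}(n) = Σ_{m∣n} μ(m)/[K_m:K]`. -/
def deltaFin (A B : 𝓞 K) (n : ℕ) : ℝ :=
  ∑ m ∈ n.divisors,
    (ArithmeticFunction.moebius m : ℝ) / (Module.finrank K (divisionField K A B m) : ℝ)

/-- Two Galois extensions `L₁, L₂` of `K` inside an algebraic closure are linearly disjoint
over `K`: the natural map `Gal(L₁L₂/K) → Gal(L₁/K) × Gal(L₂/K)` is an isomorphism.
Since this map is always injective, and since every pair of `K`-automorphisms of `L₁` and
`L₂` extends to a pair of `K`-embeddings into the algebraic closure and conversely (the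
extensions being normal), this is equivalent to the following statement: every pair of
`K`-embeddings of `L₁` and `L₂` into the algebraic closure is induced by a single
`K`-automorphism of the algebraic closure. -/
def LinearlyDisjointPair (L₁ L₂ : IntermediateField K (AlgebraicClosure K)) : Prop :=
  Function.Surjective (fun σ : AlgebraicClosure K ≃ₐ[K] AlgebraicClosure K =>
    (σ.toAlgHom.comp L₁.val, σ.toAlgHom.comp L₂.val))

/-! ### Auxiliary definitions and lemmas -/

open WeierstrassCurve WeierstrassCurve.Affine
open scoped WeierstrassCurve.Affine

set_option linter.unusedSectionVars false

open Classical

local notation "K̄" => AlgebraicClosure K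

variable (A B : 𝓞 K)

/-- The short Weierstrass curve viewed over the base number field `K`. -/
def Wc : WeierstrassCurve.Affine K :=
  shortCurve K (algebraMap (𝓞 K) K A) (algebraMap (𝓞 K) K B)

lemma curve_eq :
    shortCurve K̄ (algebraMap (𝓞 K) K̄ A) (algebraMap (𝓞 K) K̄ B)
      = ((Wc K A B).baseChange K̄).toAffine := by
  simp only [Wc, shortCurve, WeierstrassCurve.baseChange, WeierstrassCurve.map,
    map_zero, IsScalarTower.algebraMap_apply (𝓞 K) K K̄]

/-- The set of affine coordinates of a point. -/
def coords : ((Wc K A B).baseChange K̄).Point → Set K̄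
  | .zero => ∅
  | @Point.some _ _ _ x y _ => {x, y}

/-- The set of coordinates of all `m`-torsion points. -/
def Tset (m : ℕ) : Set K̄ := ⋃ P ∈ {P : ((Wc K A B).baseChange K̄).Point | m • P = 0}, coords K A B P

lemma divisionField_eq (m : ℕ) :
    divisionField K A B m = IntermediateField.adjoin K (Tset K A B m) := by
  have : divisionField K A B m = IntermediateField.adjoin K
      {z : K̄ | ∃ (x y : K̄) (h : ((Wc K A B).baseChange K̄).toAffine.Nonsingular x y),
        m • (WeierstrassCurve.Affine.Point.some x y h) = 0 ∧ (z = x ∨ z = y)} := by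
    rw [divisionField, curve_eq]
  rw [this]
  congr 1
  ext z
  constructor
  · rintro ⟨x, y, h, h0, hz⟩
    exact Set.mem_biUnion (show m • (Point.some x y h) = 0 from h0)
      (by rcases hz with rfl | rfl <;> simp [coords])
  · rintro ⟨S, ⟨P, rfl⟩, hz⟩
    simp only [Set.mem_iUnion] at hz
    obtain ⟨hP, hzc⟩ := hz
    cases P with
    | zero => simp [coords] at hzc
    | @some x y h =>
      exact ⟨x, y, h, hP, by simpa [coords] using hzc⟩

/-- The map on points induced by the inclusion of an intermediate field. -/
def ptmap (L : IntermediateField K K̄) : ((Wc K A B).baseChange L).Point →+ ((Wc K A B).baseChange K̄).Point :=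
  WeierstrassCurve.Affine.Point.map (W' := Wc K A B) L.val

lemma mem_range_ptmap_iff (L : IntermediateField K K̄) (P : ((Wc K A B).baseChange K̄).Point) :
    P ∈ Set.range (ptmap K A B L) ↔ coords K A B P ⊆ (L : Set K̄) := by
  constructor
  · rintro ⟨Q, rfl⟩
    cases Q with
    | zero => simp [ptmap, Point.map, coords, Point.zero_def]
    | @some x y h =>
      intro z hz
      have : ptmap K A B L (Point.some _ _ h)
          = Point.some _ _ ((baseChange_nonsingular (Wc K A B) (L.val).injective x y).mpr h) := rfl
      rw [this] at hz
      simp only [coords] at hz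
      rcases hz with rfl | rfl
      · exact x.2
      · exact y.2
  · intro hc
    cases P with
    | zero => exact ⟨0, rfl⟩
    | @some x y h =>
      simp only [coords, Set.insert_subset_iff, Set.singleton_subset_iff] at hc
      obtain ⟨hx, hy⟩ := hc
      lift x to L using hx with x' hx'
      lift y to L using hy with y' hy'
      exact ⟨Point.some _ _ ((baseChange_nonsingular (Wc K A B) (L.val).injective x' y').mp h), rfl⟩

lemma Tset_mono {m n : ℕ} (h : m ∣ n) : Tset K A B m ⊆ Tset K A B n := by
  intro z hz
  rcases hz with ⟨S, ⟨P, rfl⟩, hz⟩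
  simp only [Set.mem_iUnion] at hz
  obtain ⟨hP, hzc⟩ := hz
  obtain ⟨c, rfl⟩ := h
  have h0 : (m * c) • P = 0 := by
    rw [mul_comm, mul_smul, show m • P = 0 from hP]
    exact smul_zero (c : ℕ) (A := ((Wc K A B).baseChange K̄).Point)
  exact Set.mem_biUnion h0 hzc

lemma coords_subset_Tset {m : ℕ} {P : ((Wc K A B).baseChange K̄).Point} (h : m • P = 0) :
    coords K A B P ⊆ Tset K A B m := fun _ hz => Set.mem_biUnion h hz

lemma divisionField_dvd_le {m n : ℕ} (h : m ∣ n) :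
    divisionField K A B m ≤ divisionField K A B n := by
  rw [divisionField_eq, divisionField_eq]
  exact IntermediateField.adjoin.mono _ _ _ (Tset_mono K A B h)

lemma divisionField_mul (m₁ m₂ : ℕ) (hcop : Nat.Coprime m₁ m₂) :
    divisionField K A B (m₁ * m₂) = divisionField K A B m₁ ⊔ divisionField K A B m₂ := by
  refine le_antisymm ?_ (sup_le (divisionField_dvd_le K A B (dvd_mul_right m₁ m₂))
    (divisionField_dvd_le K A B (dvd_mul_left m₂ m₁)))
  rw [divisionField_eq, divisionField_eq, divisionField_eq]
  set L := IntermediateField.adjoin K (Tset K A B m₁) ⊔ IntermediateField.adjoin K (Tset K A B m₂)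
    with hL
  rw [IntermediateField.adjoin_le_iff]
  rintro z ⟨S, ⟨P, rfl⟩, hz⟩
  simp only [Set.mem_iUnion] at hz
  obtain ⟨hP, hzc⟩ := hz
  replace hP : (m₁ * m₂) • P = 0 := hP
  have hQ₂ : m₁ • P ∈ Set.range (ptmap K A B L) := by
    rw [mem_range_ptmap_iff]
    refine (coords_subset_Tset K A B (m := m₂) ?_).trans ?_
    · rw [← mul_smul, mul_comm, hP]
    · exact (IntermediateField.subset_adjoin K _).trans
        (SetLike.coe_subset_coe.mpr le_sup_right)
  have hQ₁ : m₂ • P ∈ Set.range (ptmap K A B L) := by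
    rw [mem_range_ptmap_iff]
    refine (coords_subset_Tset K A B (m := m₁) ?_).trans ?_
    · rw [← mul_smul, hP]
    · exact (IntermediateField.subset_adjoin K _).trans
        (SetLike.coe_subset_coe.mpr le_sup_left)
  have hPmem : P ∈ Set.range (ptmap K A B L) := by
    obtain ⟨a, b, hab⟩ := (Nat.isCoprime_iff_coprime.mpr hcop : IsCoprime (m₁ : ℤ) (m₂ : ℤ))
    have hPe : P = a • ((m₁ : ℤ) • P) + b • ((m₂ : ℤ) • P) := by
      rw [smul_smul, smul_smul, ← add_zsmul, hab, one_zsmul]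
    rw [← AddMonoidHom.coe_range, SetLike.mem_coe] at hQ₁ hQ₂ ⊢
    rw [hPe]
    refine AddSubgroup.add_mem _ (AddSubgroup.zsmul_mem _ ?_ a) (AddSubgroup.zsmul_mem _ ?_ b)
    · rwa [natCast_zsmul]
    · rwa [natCast_zsmul]
  rw [mem_range_ptmap_iff] at hPmem
  exact hPmem hzc

lemma finrank_sup_of_pair (M₁ M₂ L₁ L₂ : IntermediateField K K̄)
    (hL₁ : L₁ ≤ M₁) (hL₂ : L₂ ≤ M₂) (hdisj : LinearlyDisjointPair K M₁ M₂) :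
    Module.finrank K ↥(L₁ ⊔ L₂) = Module.finrank K L₁ * Module.finrank K L₂ := by
  by_cases fd₁ : FiniteDimensional K L₁
  case neg =>
    have hsup : ¬ FiniteDimensional K ↥(L₁ ⊔ L₂) := fun h =>
      fd₁ (FiniteDimensional.of_injective
        ((IntermediateField.inclusion (le_sup_left : L₁ ≤ L₁ ⊔ L₂)).toLinearMap)
        (IntermediateField.inclusion (le_sup_left : L₁ ≤ L₁ ⊔ L₂)).injective)
    rw [Module.finrank_of_infinite_dimensional fd₁,
      Module.finrank_of_infinite_dimensional hsup, zero_mul]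
  by_cases fd₂ : FiniteDimensional K L₂
  case neg =>
    have hsup : ¬ FiniteDimensional K ↥(L₁ ⊔ L₂) := fun h =>
      fd₂ (FiniteDimensional.of_injective
        ((IntermediateField.inclusion (le_sup_right : L₂ ≤ L₁ ⊔ L₂)).toLinearMap)
        (IntermediateField.inclusion (le_sup_right : L₂ ≤ L₁ ⊔ L₂)).injective)
    rw [Module.finrank_of_infinite_dimensional fd₂,
      Module.finrank_of_infinite_dimensional hsup, mul_zero]
  haveI : FiniteDimensional K ↥(L₁ ⊔ L₂) := IntermediateField.finiteDimensional_sup L₁ L₂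
  set ρ : (↥(L₁ ⊔ L₂) →ₐ[K] K̄) → ((L₁ →ₐ[K] K̄) × (L₂ →ₐ[K] K̄)) := fun f =>
    (f.comp (IntermediateField.inclusion le_sup_left),
     f.comp (IntermediateField.inclusion le_sup_right)) with hρ
  have hinj : Function.Injective ρ := by
    intro f g hfg
    refine IntermediateField.algHom_ext_of_eq_adjoin K
      (IntermediateField.sup_def L₁ L₂) (fun x hx => ?_)
    rcases hx with hx | hx
    · exact congrFun (congrArg DFunLike.coe (congrArg Prod.fst hfg)) ⟨x, hx⟩
    · exact congrFun (congrArg DFunLike.coe (congrArg Prod.snd hfg)) ⟨x, hx⟩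
  have hsurj : Function.Surjective ρ := by
    rintro ⟨g₁, g₂⟩
    have hb₁ : Function.Bijective (g₁.liftNormal K̄) := AlgHom.normal_bijective K K̄ K̄ _
    have hb₂ : Function.Bijective (g₂.liftNormal K̄) := AlgHom.normal_bijective K K̄ K̄ _
    set τ₁ : K̄ ≃ₐ[K] K̄ := AlgEquiv.ofBijective _ hb₁ with hτ₁
    set τ₂ : K̄ ≃ₐ[K] K̄ := AlgEquiv.ofBijective _ hb₂ with hτ₂
    obtain ⟨σ, hσ⟩ := hdisj (τ₁.toAlgHom.comp M₁.val, τ₂.toAlgHom.comp M₂.val)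
    refine ⟨σ.toAlgHom.comp (L₁ ⊔ L₂).val, ?_⟩
    have h1 := congrArg Prod.fst hσ
    have h2 := congrArg Prod.snd hσ
    simp only at h1 h2
    refine Prod.ext ?_ ?_
    · refine AlgHom.ext fun x => ?_
      have e1 : σ (M₁.val ⟨x.1, hL₁ x.2⟩) = τ₁ (x.1) :=
        congrFun (congrArg DFunLike.coe h1) ⟨x.1, hL₁ x.2⟩
      have e2 : τ₁ (x.1) = g₁ x := by
        have := AlgHom.liftNormal_commutes g₁ K̄ x
        simpa [hτ₁] using this
      exact e1.trans e2
    · refine AlgHom.ext fun x => ?_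
      have e1 : σ (M₂.val ⟨x.1, hL₂ x.2⟩) = τ₂ (x.1) :=
        congrFun (congrArg DFunLike.coe h2) ⟨x.1, hL₂ x.2⟩
      have e2 : τ₂ (x.1) = g₂ x := by
        have := AlgHom.liftNormal_commutes g₂ K̄ x
        simpa [hτ₂] using this
      exact e1.trans e2
  have hcard := Fintype.card_congr (Equiv.ofBijective ρ ⟨hinj, hsurj⟩)
  rwa [AlgHom.card, Fintype.card_prod, AlgHom.card, AlgHom.card] at hcard

/-- If `n₁, n₂` are coprime squarefree positive integers with `K_{n₁}` and `K_{n₂}` linearly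
disjoint over `K`, then `δ_{E/K}(n₁n₂) = δ_{E/K}(n₁)·δ_{E/K}(n₂)`. -/
theorem deltaFin_mul_of_linearlyDisjoint
    (A B : 𝓞 K) (hΔ : discABS K A B ≠ 0)
    (n₁ n₂ : ℕ) (h₁ : 0 < n₁) (h₂ : 0 < n₂)
    (hsf₁ : Squarefree n₁) (hsf₂ : Squarefree n₂) (hcop : Nat.Coprime n₁ n₂)
    (hdisj : LinearlyDisjointPair K (divisionField K A B n₁) (divisionField K A B n₂)) :
    deltaFin K A B (n₁ * n₂) = deltaFin K A B n₁ * deltaFin K A B n₂ := by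
  classical
  set f : ℕ → ℝ := fun m =>
    (ArithmeticFunction.moebius m : ℝ) / (Module.finrank K (divisionField K A B m) : ℝ) with hf
  have key : ∀ m₁ ∈ n₁.divisors, ∀ m₂ ∈ n₂.divisors, f (m₁ * m₂) = f m₁ * f m₂ := by
    intro m₁ hm₁ m₂ hm₂
    rw [Nat.mem_divisors] at hm₁ hm₂
    have hc : Nat.Coprime m₁ m₂ :=
      Nat.Coprime.coprime_dvd_left hm₁.1 (Nat.Coprime.coprime_dvd_right hm₂.1 hcop)
    have hμ : ArithmeticFunction.moebius (m₁ * m₂)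
        = ArithmeticFunction.moebius m₁ * ArithmeticFunction.moebius m₂ :=
      ArithmeticFunction.isMultiplicative_moebius.map_mul_of_coprime hc
    have hd : Module.finrank K (divisionField K A B (m₁ * m₂))
        = Module.finrank K (divisionField K A B m₁) *
          Module.finrank K (divisionField K A B m₂) := by
      rw [divisionField_mul K A B m₁ m₂ hc]
      exact finrank_sup_of_pair K _ _ _ _
        (divisionField_dvd_le K A B hm₁.1) (divisionField_dvd_le K A B hm₂.1) hdisj
    simp only [hf, hμ, hd]
    push_cast
    rw [div_mul_div_comm]
  have hL : deltaFin K A B (n₁ * n₂)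
      = ∑ p ∈ n₁.divisors ×ˢ n₂.divisors, f (p.1 * p.2) := by
    rw [deltaFin]
    refine Finset.sum_nbij' (i := fun m => (m.gcd n₁, m.gcd n₂))
      (j := fun p => p.1 * p.2) ?_ ?_ ?_ ?_ ?_
    · intro m hm
      simp only [Finset.mem_product, Nat.mem_divisors]
      exact ⟨⟨Nat.gcd_dvd_right _ _, h₁.ne'⟩, ⟨Nat.gcd_dvd_right _ _, h₂.ne'⟩⟩
    · intro p hp
      simp only [Finset.mem_product, Nat.mem_divisors] at hp
      exact Nat.mem_divisors.mpr ⟨mul_dvd_mul hp.1.1 hp.2.1, mul_ne_zero h₁.ne' h₂.ne'⟩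
    · intro m hm
      rw [Nat.mem_divisors] at hm
      exact (Nat.gcd_mul_gcd_eq_iff_dvd_mul_of_coprime hcop).mpr hm.1
    · intro p hp
      simp only [Finset.mem_product, Nat.mem_divisors] at hp
      have c1 : Nat.Coprime p.2 n₁ := Nat.Coprime.coprime_dvd_left hp.2.1 hcop.symm
      have c2 : Nat.Coprime p.1 n₂ := Nat.Coprime.coprime_dvd_left hp.1.1 hcop
      have e1 : (p.1 * p.2).gcd n₁ = p.1 := by
        rw [Nat.Coprime.gcd_mul_right_cancel _ c1, Nat.gcd_eq_left hp.1.1]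
      have e2 : (p.1 * p.2).gcd n₂ = p.2 := by
        rw [mul_comm, Nat.Coprime.gcd_mul_right_cancel _ c2, Nat.gcd_eq_left hp.2.1]
      exact Prod.ext e1 e2
    · intro m hm
      rw [Nat.mem_divisors] at hm
      rw [(Nat.gcd_mul_gcd_eq_iff_dvd_mul_of_coprime hcop).mpr hm.1]
  have hR : deltaFin K A B n₁ * deltaFin K A B n₂
      = ∑ p ∈ n₁.divisors ×ˢ n₂.divisors, f p.1 * f p.2 := by
    rw [deltaFin, deltaFin, Finset.sum_mul_sum, ← Finset.sum_product']
  rw [hL, hR]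
  refine Finset.sum_congr rfl fun p hp => ?_
  simp only [Finset.mem_product] at hp
  exact key p.1 hp.1 p.2 hp.2

end
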